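/- For n = 2 the determinant identity reads: for a 4×4 matrix J over ℂ, with {i,l} = J_{i1}J_{l2} − J_{i2}J_{l1} + J_{i3}J_{l4} − J_{i4}J_{l3}, one has det J = {1,2}{3,4} − {1,3}{2,4} + {1,4}{2,3}. -/

import Mathlib

/-- for a `4×4` matrix `J` over `ℂ`, with
`{i,l} = J_{i1}J_{l2} − J_{i2}J_{l1} + J_{i3}J_{l4} − J_{i4}J_{l3}`,
one has `det J = {1,2}{3,4} − {1,3}{2,4} + {1,4}{2,3}`. -/
theorem stmt4 (J : Matrix (Fin 4) (Fin 4) ℂ)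
    (pb : Fin 4 → Fin 4 → ℂ)
    (hpb : ∀ i l, pb i l = J i 0 * J l 1 - J i 1 * J l 0 + J i 2 * J l 3 - J i 3 * J l 2) :
    J.det = pb 0 1 * pb 2 3 - pb 0 2 * pb 1 3 + pb 0 3 * pb 1 2 := by
  simp only [hpb]
  rw [Matrix.det_succ_row_zero]
  simp [Fin.sum_univ_succ, Matrix.det_fin_three, Matrix.submatrix, Fin.succAbove]
  ring
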